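/- Let K be a field, V a K-vector space, W a subspace of V, and f, g linear automorphisms of V. Then, as cardinals, codim(W : W ∩ g(f(W))) ≤ codim(W : W ∩ g(W)) + codim(W : W ∩ f(W)). -/

import Mathlib

open Cardinal

noncomputable def scodim {K V : Type*} [Field K] [AddCommGroup V] [Module K V]
    (W U : Submodule K V) : Cardinal :=
  Module.rank K (↥W ⧸ (U.comap W.subtype))

/-- Rank of a quotient by a larger submodule is at most that by a smaller one. -/
lemma rank_quot_le_quot {K M : Type*} [Field K] [AddCommGroup M] [Module K M]
    {X Y : Submodule K M} (h : X ≤ Y) :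
    Module.rank K (M ⧸ Y) ≤ Module.rank K (M ⧸ X) := by
  have hs : Function.Surjective (Submodule.mapQ X Y LinearMap.id h) := by
    intro y
    obtain ⟨m, rfl⟩ := Y.mkQ_surjective y
    exact ⟨X.mkQ m, rfl⟩
  calc Module.rank K (M ⧸ Y)
      = Module.rank K (LinearMap.range (Submodule.mapQ X Y LinearMap.id h)) :=
        (rank_range_of_surjective _ hs).symm
    _ ≤ Module.rank K (M ⧸ X) := rank_range_le _

theorem stmt8 {K V : Type*} [Field K] [AddCommGroup V] [Module K V]
    (W : Submodule K V) (f g : V ≃ₗ[K] V) :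
    scodim W (W ⊓ (Submodule.map (g : V →ₗ[K] V)
        (Submodule.map (f : V →ₗ[K] V) W)))
      ≤ scodim W (W ⊓ Submodule.map (g : V →ₗ[K] V) W)
        + scodim W (W ⊓ Submodule.map (f : V →ₗ[K] V) W) := by
  classical
  set gW := Submodule.map (g : V →ₗ[K] V) W with hgW
  set fW := Submodule.map (f : V →ₗ[K] V) W with hfW
  set gfW := Submodule.map (g : V →ₗ[K] V) fW with hgfW
  -- submodules of W
  set a : Submodule K W := (W ⊓ gW ⊓ gfW).comap W.subtype with ha
  set u : Submodule K W := (W ⊓ gW).comap W.subtype with hu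
  set b : Submodule K W := (W ⊓ gfW).comap W.subtype with hb
  set c : Submodule K W := (W ⊓ fW).comap W.subtype with hc
  have hab : a ≤ b := Submodule.comap_mono (inf_le_inf_right _ inf_le_left)
  have hau : a ≤ u := Submodule.comap_mono inf_le_left
  -- step 1
  have step1 : Module.rank K (↥W ⧸ b) ≤ Module.rank K (↥W ⧸ a) := rank_quot_le_quot hab
  -- step 2 : rank (W⧸a) = rank (W⧸u) + rank (u.map a.mkQ)
  have step2 : Module.rank K (↥W ⧸ a)
      = Module.rank K (↥W ⧸ u) + Module.rank K (u.map a.mkQ) := by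
    have h1 := Submodule.rank_quotient_add_rank (u.map a.mkQ)
    have e : ((↥W ⧸ a) ⧸ u.map a.mkQ) ≃ₗ[K] (↥W ⧸ u) :=
      Submodule.quotientQuotientEquivQuotient a u hau
    rw [e.rank_eq] at h1
    exact h1.symm
  -- step 3 : rank (u.map a.mkQ) ≤ rank (W ⧸ c)
  have step3 : Module.rank K (u.map a.mkQ) ≤ Module.rank K (↥W ⧸ c) := by
    -- the map u → W, x ↦ g⁻¹ x
    have hmem : ∀ x : u, ((g.symm : V →ₗ[K] V) ∘ₗ W.subtype ∘ₗ u.subtype) x ∈ W := by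
      rintro ⟨⟨x, hxW⟩, hxu⟩
      have hx2 : x ∈ W ⊓ gW := hxu
      obtain ⟨w, hw, hwx⟩ := hx2.2
      simpa [← hwx] using hw
    set m : u →ₗ[K] W :=
      LinearMap.codRestrict W ((g.symm : V →ₗ[K] V) ∘ₗ W.subtype ∘ₗ u.subtype) hmem with hm
    set χ : u →ₗ[K] (↥W ⧸ c) := c.mkQ ∘ₗ m with hχ
    -- q : u → W ⧸ a with range = u.map a.mkQ
    set q : u →ₗ[K] (↥W ⧸ a) := a.mkQ ∘ₗ u.subtype with hq
    have hrange : LinearMap.range q = u.map a.mkQ := by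
      rw [hq, LinearMap.range_comp, Submodule.range_subtype]
    have hker : LinearMap.ker χ ≤ LinearMap.ker q := by
      rintro ⟨⟨x, hxW⟩, hxu⟩ hx
      have hcm : (g.symm : V →ₗ[K] V) x ∈ fW := by
        simpa [hχ, hm, LinearMap.mem_ker, Submodule.Quotient.mk_eq_zero, hc,
          Submodule.mem_comap] using hx
      have hxgfW : x ∈ gfW := ⟨(g.symm : V →ₗ[K] V) x, hcm, by simp⟩
      have hxa : (⟨x, hxW⟩ : W) ∈ a := ⟨hxu, hxgfW⟩
      simp only [hq, LinearMap.mem_ker, LinearMap.comp_apply, Submodule.mkQ_apply,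
        Submodule.Quotient.mk_eq_zero, Submodule.coe_subtype]
      exact hxa
    calc Module.rank K (u.map a.mkQ)
        = Module.rank K (LinearMap.range q) := by rw [hrange]
      _ = Module.rank K (u ⧸ LinearMap.ker q) := (LinearMap.quotKerEquivRange q).rank_eq.symm
      _ ≤ Module.rank K (u ⧸ LinearMap.ker χ) := rank_quot_le_quot hker
      _ = Module.rank K (LinearMap.range χ) := (LinearMap.quotKerEquivRange χ).rank_eq
      _ ≤ Module.rank K (↥W ⧸ c) := Submodule.rank_le _
  calc Module.rank K (↥W ⧸ b) ≤ Module.rank K (↥W ⧸ a) := step1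
    _ = Module.rank K (↥W ⧸ u) + Module.rank K (u.map a.mkQ) := step2
    _ ≤ Module.rank K (↥W ⧸ u) + Module.rank K (↥W ⧸ c) := add_le_add_right step3 _
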